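/- Let X be an m × n real matrix with rank X = r, let k be a natural number with r ≤ k, let U be an m × r real matrix with Uᵀ U = I_r and U Uᵀ X = X, and let V be an n × r real matrix with Vᵀ V = I_r and X V Vᵀ = X. Then, in the space of m × n real matrices equipped with the Frobenius norm, the tangent cone (in the sense of Mathlib's tangentConeAt, i.e., the Bouligand contingent cone) at X to the set {Y : rank Y ≤ k} of matrices of rank at most k equals the set of all m × n real matrices G with rank ((I_m − U Uᵀ) G (I_n − V Vᵀ)) ≤ k − r. -/

import Mathlib

open Matrix

open Filter Module in
/-- Subadditivity of matrix rank. -/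
private lemma aux_rank_add_le {m n : ℕ} (A B : Matrix (Fin m) (Fin n) ℝ) :
    (A + B).rank ≤ A.rank + B.rank := by
  have h : LinearMap.range (A + B).mulVecLin ≤
      LinearMap.range A.mulVecLin ⊔ LinearMap.range B.mulVecLin := by
    rintro x ⟨v, rfl⟩
    have : (A + B).mulVecLin v = A.mulVecLin v + B.mulVecLin v := by
      simp [Matrix.mulVecLin_apply, Matrix.add_mulVec]
    rw [this]
    exact Submodule.add_mem _ (Submodule.mem_sup_left ⟨v, rfl⟩)
      (Submodule.mem_sup_right ⟨v, rfl⟩)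
  calc (A + B).rank ≤ finrank ℝ ↥(LinearMap.range A.mulVecLin ⊔ LinearMap.range B.mulVecLin) :=
        Submodule.finrank_mono h
    _ ≤ A.rank + B.rank := Submodule.finrank_add_le_finrank_add_finrank _ _

open Filter Module in
/-- A square matrix of full rank is invertible. -/
private lemma aux_isUnit_of_rank_eq {t : ℕ} (M : Matrix (Fin t) (Fin t) ℝ) (h : M.rank = t) :
    IsUnit M := by
  rw [← Matrix.mulVec_surjective_iff_isUnit]
  have htop : LinearMap.range M.mulVecLin = ⊤ := by
    apply Submodule.eq_top_of_finrank_eq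
    rw [← Matrix.rank, h, finrank_pi]
    simp
  intro v
  obtain ⟨w, hw⟩ := htop ▸ (Submodule.mem_top : v ∈ ⊤)
  exact ⟨w, hw⟩

open Filter Module in
/-- Any matrix can be compressed by suitable rectangular matrices to an invertible square
matrix of size its rank. -/
private lemma aux_exists_unit_compress {m n : ℕ} (A : Matrix (Fin m) (Fin n) ℝ) :
    ∃ (L : Matrix (Fin A.rank) (Fin m) ℝ) (R : Matrix (Fin n) (Fin A.rank) ℝ),
      IsUnit (L * A * R) := by
  let b : Basis (Fin A.rank) ℝ ↥(LinearMap.range A.mulVecLin) :=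
    Module.finBasisOfFinrankEq ℝ _ rfl
  have hb : ∀ i, ∃ x, A *ᵥ x = (b i : Fin m → ℝ) := fun i => (b i).2
  choose x hx using hb
  set R : Matrix (Fin n) (Fin A.rank) ℝ := Matrix.of (fun j i => x i j) with hR
  have hcol : (A * R)ᵀ = Matrix.of (fun i => (b i : Fin m → ℝ)) := by
    ext i j
    simp only [Matrix.transpose_apply, Matrix.mul_apply, Matrix.of_apply]
    rw [← hx i]
    simp [Matrix.mulVec, dotProduct, hR, mul_comm]
  have hrankAR : (A * R).rank = A.rank := by
    rw [Matrix.rank, Matrix.range_mulVecLin]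
    show finrank ℝ (Submodule.span ℝ (Set.range (A * R)ᵀ)) = A.rank
    rw [hcol]
    have : Set.range (Matrix.of (fun i => (b i : Fin m → ℝ)) : Matrix (Fin A.rank) (Fin m) ℝ)
        = Subtype.val '' (Set.range b) := by
      ext v; constructor
      · rintro ⟨i, rfl⟩; exact ⟨b i, ⟨i, rfl⟩, rfl⟩
      · rintro ⟨w, ⟨i, rfl⟩, rfl⟩; exact ⟨i, rfl⟩
    rw [this, ← Submodule.coe_subtype, ← Submodule.map_span, b.span_eq, Submodule.map_top,
      Submodule.range_subtype]
    rfl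
  refine ⟨(A * R)ᵀ, R, ?_⟩
  apply aux_isUnit_of_rank_eq
  rw [Matrix.mul_assoc, Matrix.rank_transpose_mul_self, hrankAR]

open Filter Module in
/-- Lower semicontinuity of the rank (with respect to the Frobenius norm topology):
a limit of matrices of rank at most `s` has rank at most `s`. -/
private lemma aux_rank_le_of_tendsto {m n s : ℕ} {Y : ℕ → Matrix (Fin m) (Fin n) ℝ}
    {Z : Matrix (Fin m) (Fin n) ℝ}
    [TopologicalSpace (Matrix (Fin m) (Fin n) ℝ)]
    (hY : Tendsto Y atTop (nhds Z))
    (hcont : ∀ (a b : ℕ) (L : Matrix (Fin a) (Fin m) ℝ) (R : Matrix (Fin n) (Fin b) ℝ),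
      Continuous fun M : Matrix (Fin m) (Fin n) ℝ => L * M * R)
    (h : ∀ᶠ i in atTop, (Y i).rank ≤ s) : Z.rank ≤ s := by
  obtain ⟨L, R, hLR⟩ := aux_exists_unit_compress Z
  have hdet : Tendsto (fun i => (L * Y i * R).det) atTop (nhds ((L * Z * R).det)) :=
    (((hcont _ _ L R).matrix_det).continuousAt.tendsto).comp hY
  have hne : (L * Z * R).det ≠ 0 :=
    isUnit_iff_ne_zero.mp ((Matrix.isUnit_iff_isUnit_det _).mp hLR)
  obtain ⟨i, h1, h2⟩ := (h.and (hdet.eventually_ne hne)).exists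
  have hunit : IsUnit (L * Y i * R) :=
    (Matrix.isUnit_iff_isUnit_det _).mpr (isUnit_iff_ne_zero.mpr h2)
  have hZr : (L * Y i * R).rank = Z.rank := by
    rw [Matrix.rank_of_isUnit _ hunit, Fintype.card_fin]
  calc Z.rank = (L * Y i * R).rank := hZr.symm
    _ ≤ (L * Y i).rank := Matrix.rank_mul_le_left _ _
    _ ≤ (Y i).rank := Matrix.rank_mul_le_right _ _
    _ ≤ s := h1

open Filter Module in
/-- The Schur-complement rank inequality. -/
private lemma aux_schur_rank_le {m n r : ℕ} (Y : Matrix (Fin m) (Fin n) ℝ)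
    (U : Matrix (Fin m) (Fin r) ℝ) (V : Matrix (Fin n) (Fin r) ℝ)
    (hA : IsUnit (Uᵀ * Y * V)) :
    r + (Y - Y * V * (Uᵀ * Y * V)⁻¹ * (Uᵀ * Y)).rank ≤ Y.rank := by
  set A := Uᵀ * Y * V with hAdef
  set W := Y - Y * V * A⁻¹ * (Uᵀ * Y) with hWdef
  have hAdet : IsUnit A.det := (Matrix.isUnit_iff_isUnit_det _).mp hA
  have hAinv : A * A⁻¹ = 1 := Matrix.mul_nonsing_inv _ hAdet
  have hAinv' : A⁻¹ * A = 1 := Matrix.nonsing_inv_mul _ hAdet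
  have hUW : Uᵀ * W = 0 := by
    rw [hWdef, Matrix.mul_sub]
    have : Uᵀ * (Y * V * A⁻¹ * (Uᵀ * Y)) = A * A⁻¹ * (Uᵀ * Y) := by
      rw [hAdef]; simp only [Matrix.mul_assoc]
    rw [this, hAinv, Matrix.one_mul, sub_self]
  have hWV : W * V = 0 := by
    rw [hWdef, Matrix.sub_mul]
    have : Y * V * A⁻¹ * (Uᵀ * Y) * V = Y * V * (A⁻¹ * A) := by
      rw [hAdef]; simp only [Matrix.mul_assoc]
    rw [this, hAinv', Matrix.mul_one, sub_self]
  set R1 := LinearMap.range (Y * V).mulVecLin with hR1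
  set R2 := LinearMap.range W.mulVecLin with hR2
  have h1 : R1 ≤ LinearMap.range Y.mulVecLin := by
    rw [hR1, Matrix.mulVecLin_mul]
    exact LinearMap.range_comp_le_range _ _
  have h2 : R2 ≤ LinearMap.range Y.mulVecLin := by
    have hWfac : W = Y * (1 - V * A⁻¹ * (Uᵀ * Y)) := by
      rw [hWdef, Matrix.mul_sub, Matrix.mul_one]
      simp only [Matrix.mul_assoc]
    rw [hR2, hWfac, Matrix.mulVecLin_mul]
    exact LinearMap.range_comp_le_range _ _
  have hdisj : Disjoint R1 R2 := by
    rw [Submodule.disjoint_def]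
    rintro v ⟨x, rfl⟩ ⟨w, hw⟩
    have hv1 : Uᵀ *ᵥ ((Y * V).mulVecLin x) = A *ᵥ x := by
      simp only [Matrix.mulVecLin_apply, Matrix.mulVec_mulVec, hAdef, Matrix.mul_assoc]
    have hv2 : Uᵀ *ᵥ ((Y * V).mulVecLin x) = 0 := by
      rw [← hw]
      simp only [Matrix.mulVecLin_apply, Matrix.mulVec_mulVec, hUW, Matrix.zero_mulVec]
    have hx : x = 0 := by
      have hinj : Function.Injective A.mulVec := Matrix.mulVec_injective_iff_isUnit.mpr hA
      apply hinj
      rw [Matrix.mulVec_zero, ← hv1, hv2]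
    simp [hx]
  have hr1 : finrank ℝ R1 = r := by
    have hle : (Y * V).rank ≤ r := (Matrix.rank_le_card_width _).trans (Fintype.card_fin r).le
    have hge : r ≤ (Y * V).rank := by
      have hAr : A.rank = r := by rw [Matrix.rank_of_isUnit _ hA, Fintype.card_fin]
      calc r = A.rank := hAr.symm
        _ = (Uᵀ * (Y * V)).rank := by rw [hAdef, Matrix.mul_assoc]
        _ ≤ (Y * V).rank := Matrix.rank_mul_le_right _ _
    exact le_antisymm hle hge
  have key : finrank ℝ ↥(R1 ⊔ R2) = r + W.rank := by
    have hsum := Submodule.finrank_sup_add_finrank_inf_eq R1 R2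
    rw [hdisj.eq_bot, finrank_bot, add_zero] at hsum
    rw [hsum, hr1]; rfl
  calc r + W.rank = finrank ℝ ↥(R1 ⊔ R2) := key.symm
    _ ≤ finrank ℝ ↥(LinearMap.range Y.mulVecLin) := Submodule.finrank_mono (sup_le h1 h2)
    _ = Y.rank := rfl

open Filter Module in
/-- The key algebraic identity for the forward inclusion. -/
private lemma aux_key_identity {m n r : ℕ} (X dd : Matrix (Fin m) (Fin n) ℝ)
    (U : Matrix (Fin m) (Fin r) ℝ) (V : Matrix (Fin n) (Fin r) ℝ)
    (hUX : U * Uᵀ * X = X) (hXV : X * (V * Vᵀ) = X)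
    (hdet : IsUnit (Uᵀ * (X + dd) * V).det) (cc : ℝ) :
    (1 - U * Uᵀ) * ((cc • dd) * (1 - V * Vᵀ)) -
      (1 - U * Uᵀ) * ((cc • dd) * (V * ((Uᵀ * (X + dd) * V)⁻¹ * (Uᵀ * (dd * (1 - V * Vᵀ)))))) =
    cc • ((X + dd) - (X + dd) * V * (Uᵀ * (X + dd) * V)⁻¹ * (Uᵀ * (X + dd))) := by
  set Y := X + dd with hY
  set A := Uᵀ * Y * V with hA
  set B := A⁻¹ with hB
  have hAB : A * B = 1 := Matrix.mul_nonsing_inv _ hdet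
  have hBA : B * A = 1 := Matrix.nonsing_inv_mul _ hdet
  set W := Y - Y * V * B * (Uᵀ * Y) with hW
  have hUW : Uᵀ * W = 0 := by
    rw [hW, Matrix.mul_sub]
    have h : Uᵀ * (Y * V * B * (Uᵀ * Y)) = A * B * (Uᵀ * Y) := by
      rw [hA]; simp only [Matrix.mul_assoc]
    rw [h, hAB, Matrix.one_mul, sub_self]
  have hWV : W * V = 0 := by
    rw [hW, Matrix.sub_mul]
    have h : Y * V * B * (Uᵀ * Y) * V = Y * V * (B * A) := by
      rw [hA]; simp only [Matrix.mul_assoc]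
    rw [h, hBA, Matrix.mul_one, sub_self]
  have hPW : (1 - U * Uᵀ) * W = W := by
    rw [Matrix.sub_mul, Matrix.one_mul, Matrix.mul_assoc, hUW, Matrix.mul_zero, sub_zero]
  have hWQ : W * (1 - V * Vᵀ) = W := by
    rw [Matrix.mul_sub, Matrix.mul_one, ← Matrix.mul_assoc, hWV, Matrix.zero_mul, sub_zero]
  have hXQ : X * (1 - V * Vᵀ) = 0 := by
    rw [Matrix.mul_sub, Matrix.mul_one, hXV, sub_self]
  have hPX : (1 - U * Uᵀ) * X = 0 := by
    rw [Matrix.sub_mul, Matrix.one_mul, hUX, sub_self]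
  have hYQ : Y * (1 - V * Vᵀ) = dd * (1 - V * Vᵀ) := by
    rw [hY, Matrix.add_mul, hXQ, zero_add]
  have hPY : (1 - U * Uᵀ) * Y = (1 - U * Uᵀ) * dd := by
    rw [hY, Matrix.mul_add, hPX, zero_add]
  have hWform : W = (1 - U * Uᵀ) * (dd * (1 - V * Vᵀ)) -
      (1 - U * Uᵀ) * (dd * (V * (B * (Uᵀ * (dd * (1 - V * Vᵀ)))))) := by
    have h1 : Y * V * B * (Uᵀ * Y) * (1 - V * Vᵀ) = Y * (V * (B * (Uᵀ * (Y * (1 - V * Vᵀ))))) := by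
      simp only [Matrix.mul_assoc]
    have hstep : W * (1 - V * Vᵀ) = dd * (1 - V * Vᵀ) -
        Y * (V * (B * (Uᵀ * (dd * (1 - V * Vᵀ))))) := by
      rw [hW, Matrix.sub_mul, h1, hYQ]
    have h2 : (1 - U * Uᵀ) * (Y * (V * (B * (Uᵀ * (dd * (1 - V * Vᵀ)))))) =
        ((1 - U * Uᵀ) * Y) * (V * (B * (Uᵀ * (dd * (1 - V * Vᵀ))))) := by
      simp only [Matrix.mul_assoc]
    have h3 : ((1 - U * Uᵀ) * dd) * (V * (B * (Uᵀ * (dd * (1 - V * Vᵀ))))) =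
        (1 - U * Uᵀ) * (dd * (V * (B * (Uᵀ * (dd * (1 - V * Vᵀ)))))) := by
      simp only [Matrix.mul_assoc]
    calc W = (1 - U * Uᵀ) * (W * (1 - V * Vᵀ)) := by rw [hWQ, hPW]
      _ = _ := by rw [hstep, Matrix.mul_sub, h2, hPY, h3]
  rw [hWform]
  simp only [smul_sub, Matrix.smul_mul, Matrix.mul_smul]

open Filter Module in
/-- Expansion of the rank-`r` perturbation product. -/
private lemma aux_expand_identity {m n r : ℕ} (t : ℝ) (U K : Matrix (Fin m) (Fin r) ℝ)
    (S N : Matrix (Fin r) (Fin r) ℝ) (Vt L : Matrix (Fin r) (Fin n) ℝ) :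
    (U + t • K) * (S + t • N) * (Vt + t • L) =
      U * S * Vt + t • (U * N * Vt + K * S * Vt + U * S * L) +
      t ^ 2 • (K * N * Vt + U * N * L + K * S * L) + t ^ 3 • (K * N * L) := by
  simp only [Matrix.add_mul, Matrix.mul_add, Matrix.smul_mul, Matrix.mul_smul, smul_add,
    smul_smul]
  module

private lemma aux_smul_cancel_cube {M : Type*} [AddCommGroup M] [Module ℝ M]
    {c t : ℝ} (h : c * t = 1) (g e f : M) :
    c • (t • g + t ^ 2 • e + t ^ 3 • f) = g + t • e + t ^ 2 • f := by
  have h2 : c * t ^ 2 = t := by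
    have : c * t ^ 2 = (c * t) * t := by ring
    rw [this, h, one_mul]
  have h3 : c * t ^ 3 = t ^ 2 := by
    have : c * t ^ 3 = (c * t) * t ^ 2 := by ring
    rw [this, h, one_mul]
  simp only [smul_add, smul_smul, h, h2, h3, one_smul]

attribute [local instance] Matrix.frobeniusNormedAddCommGroup Matrix.frobeniusNormedSpace

open Filter Module in
private lemma aux_tendsto_matmul {p q s : ℕ} {f : ℕ → Matrix (Fin p) (Fin q) ℝ}
    {g : ℕ → Matrix (Fin q) (Fin s) ℝ} {A : Matrix (Fin p) (Fin q) ℝ}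
    {B : Matrix (Fin q) (Fin s) ℝ} (hf : Tendsto f atTop (nhds A))
    (hg : Tendsto g atTop (nhds B)) :
    Tendsto (fun i => f i * g i) atTop (nhds (A * B)) :=
  ((continuous_fst.matrix_mul continuous_snd).continuousAt.tendsto).comp (hf.prodMk_nhds hg)

open Filter Module in
private lemma aux_inv_tendsto {r : ℕ} {A : ℕ → Matrix (Fin r) (Fin r) ℝ}
    {S : Matrix (Fin r) (Fin r) ℝ} (hA : Tendsto A atTop (nhds S)) (hS : S.det ≠ 0) :
    Tendsto (fun i => (A i)⁻¹) atTop (nhds S⁻¹) := by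
  have hdet : Tendsto (fun i => (A i).det) atTop (nhds S.det) :=
    (continuous_id.matrix_det.continuousAt.tendsto).comp hA
  have hadj : Tendsto (fun i => (A i).adjugate) atTop (nhds S.adjugate) :=
    (continuous_id.matrix_adjugate.continuousAt.tendsto).comp hA
  have h := (hdet.inv₀ hS).smul hadj
  have he : ∀ M : Matrix (Fin r) (Fin r) ℝ, M⁻¹ = M.det⁻¹ • M.adjugate := fun M => by
    rw [Matrix.inv_def, Ring.inverse_eq_inv']
  simp only [← he] at h
  exact h

open Filter Module in
theorem tangent_cone_to_bounded_rank_variety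
    {m n r k : ℕ} (X : Matrix (Fin m) (Fin n) ℝ) (hrX : X.rank = r) (hrk : r ≤ k)
    (U : Matrix (Fin m) (Fin r) ℝ) (hU : Uᵀ * U = 1) (hUX : U * Uᵀ * X = X)
    (V : Matrix (Fin n) (Fin r) ℝ) (hV : Vᵀ * V = 1) (hXV : X * (V * Vᵀ) = X) :
    tangentConeAt ℝ {Y : Matrix (Fin m) (Fin n) ℝ | Y.rank ≤ k} X =
      {G : Matrix (Fin m) (Fin n) ℝ | ((1 - U * Uᵀ) * G * (1 - V * Vᵀ)).rank ≤ k - r} := by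
  have hcontLR : ∀ (a b : ℕ) (L : Matrix (Fin a) (Fin m) ℝ) (R : Matrix (Fin n) (Fin b) ℝ),
      Continuous fun M : Matrix (Fin m) (Fin n) ℝ => L * M * R := fun a b L R =>
    (continuous_const.matrix_mul continuous_id).matrix_mul continuous_const
  set S := Uᵀ * X * V with hSdef
  have hXS : U * S * Vᵀ = X := by
    rw [hSdef]
    calc U * (Uᵀ * X * V) * Vᵀ = U * Uᵀ * X * (V * Vᵀ) := by simp only [Matrix.mul_assoc]
      _ = X := by rw [hUX, hXV]
  have hSrank : S.rank = r := by
    refine le_antisymm ((Matrix.rank_le_card_width S).trans (Fintype.card_fin r).le) ?_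
    calc r = X.rank := hrX.symm
      _ = (U * (S * Vᵀ)).rank := by rw [← Matrix.mul_assoc, hXS]
      _ ≤ (S * Vᵀ).rank := Matrix.rank_mul_le_right _ _
      _ ≤ S.rank := Matrix.rank_mul_le_left _ _
  have hSunit : IsUnit S := aux_isUnit_of_rank_eq S hSrank
  have hSdet : IsUnit S.det := (Matrix.isUnit_iff_isUnit_det S).mp hSunit
  have hSdetne : S.det ≠ 0 := hSdet.ne_zero
  have hS1 : S⁻¹ * S = 1 := Matrix.nonsing_inv_mul S hSdet
  have hS2 : S * S⁻¹ = 1 := Matrix.mul_nonsing_inv S hSdet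
  ext G
  simp only [Set.mem_setOf_eq]
  constructor
  · -- forward inclusion
    intro hGt
    obtain ⟨c, d, hc, hmem, hcd⟩ := mem_tangentConeAt_iff_exists_seq_norm_tendsto_atTop.mp hGt
    have hd0 : Tendsto d atTop (nhds 0) := tangentConeAt.lim_zero atTop hc hcd
    set A : ℕ → Matrix (Fin r) (Fin r) ℝ := fun i => Uᵀ * (X + d i) * V with hAdef
    have hAt : Tendsto A atTop (nhds S) := by
      have hcont : Continuous (fun M : Matrix (Fin m) (Fin n) ℝ => Uᵀ * (X + M) * V) :=
        (continuous_const.matrix_mul (continuous_const.add continuous_id)).matrix_mul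
          continuous_const
      have h := hcont.continuousAt.tendsto.comp hd0
      rw [hSdef]
      simp only [add_zero] at h
      exact h
    have hdett : Tendsto (fun i => (A i).det) atTop (nhds S.det) :=
      (continuous_id.matrix_det.continuousAt.tendsto).comp hAt
    have hdetev : ∀ᶠ i in atTop, (A i).det ≠ 0 := hdett.eventually_ne hSdetne
    have hBt : Tendsto (fun i => (A i)⁻¹) atTop (nhds S⁻¹) := aux_inv_tendsto hAt hSdetne
    set W : ℕ → Matrix (Fin m) (Fin n) ℝ :=
      fun i => (X + d i) - (X + d i) * V * (A i)⁻¹ * (Uᵀ * (X + d i)) with hWdef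
    set Z : ℕ → Matrix (Fin m) (Fin n) ℝ := fun i =>
      (1 - U * Uᵀ) * ((c i • d i) * (1 - V * Vᵀ)) -
        (1 - U * Uᵀ) * ((c i • d i) * (V * ((A i)⁻¹ * (Uᵀ * (d i * (1 - V * Vᵀ))))))
      with hZdef
    have hZrank : ∀ᶠ i in atTop, (Z i).rank ≤ k - r := by
      filter_upwards [hmem, hdetev] with i h1 h2
      have hAu : IsUnit (Uᵀ * (X + d i) * V) :=
        (Matrix.isUnit_iff_isUnit_det _).mpr (isUnit_iff_ne_zero.mpr h2)
      have hsr := aux_schur_rank_le (X + d i) U V hAu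
      have hk : (X + d i).rank ≤ k := h1
      have hWr : (W i).rank ≤ k - r := by
        have : r + (W i).rank ≤ (X + d i).rank := hsr
        omega
      have hid : Z i = c i • W i := aux_key_identity X (d i) U V hUX hXV
        ((Matrix.isUnit_iff_isUnit_det _).mp hAu) (c i)
      rw [hid]
      have hsm : c i • W i = (c i • (1 : Matrix (Fin m) (Fin m) ℝ)) * W i := by
        rw [Matrix.smul_mul, Matrix.one_mul]
      rw [hsm]
      exact le_trans (Matrix.rank_mul_le_right _ _) hWr
    have hT1 : Tendsto (fun i => (1 - U * Uᵀ) * ((c i • d i) * (1 - V * Vᵀ))) atTop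
        (nhds ((1 - U * Uᵀ) * (G * (1 - V * Vᵀ)))) :=
      aux_tendsto_matmul tendsto_const_nhds (aux_tendsto_matmul hcd
        tendsto_const_nhds)
    have hT2 : Tendsto (fun i =>
        (1 - U * Uᵀ) * ((c i • d i) * (V * ((A i)⁻¹ * (Uᵀ * (d i * (1 - V * Vᵀ))))))) atTop
        (nhds ((1 - U * Uᵀ) * (G * (V * (S⁻¹ *
          (Uᵀ * ((0 : Matrix (Fin m) (Fin n) ℝ) * (1 - V * Vᵀ)))))))) :=
      aux_tendsto_matmul tendsto_const_nhds (aux_tendsto_matmul hcd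
        (aux_tendsto_matmul tendsto_const_nhds (aux_tendsto_matmul hBt
          (aux_tendsto_matmul tendsto_const_nhds
            (aux_tendsto_matmul hd0 tendsto_const_nhds)))))
    have hZt : Tendsto Z atTop (nhds ((1 - U * Uᵀ) * (G * (1 - V * Vᵀ)))) := by
      have h := hT1.sub hT2
      simp only [Matrix.zero_mul, Matrix.mul_zero, sub_zero] at h
      exact h
    have hfin : ((1 - U * Uᵀ) * (G * (1 - V * Vᵀ))).rank ≤ k - r :=
      aux_rank_le_of_tendsto hZt hcontLR hZrank
    rw [Matrix.mul_assoc]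
    exact hfin
  · -- reverse inclusion
    intro hG
    set K := (1 - U * Uᵀ) * G * V * S⁻¹ with hK
    set N := Uᵀ * G * V with hN
    set L := S⁻¹ * (Uᵀ * G * (1 - V * Vᵀ)) with hL
    have hlin : U * N * Vᵀ + K * S * Vᵀ + U * S * L =
        G - (1 - U * Uᵀ) * G * (1 - V * Vᵀ) := by
      have e1 : U * N * Vᵀ = (U * Uᵀ) * (G * (V * Vᵀ)) := by
        rw [hN]; simp only [Matrix.mul_assoc]
      have e2 : K * S * Vᵀ = (1 - U * Uᵀ) * (G * (V * Vᵀ)) := by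
        rw [hK]
        have h : S⁻¹ * (S * Vᵀ) = Vᵀ := by rw [← Matrix.mul_assoc, hS1, Matrix.one_mul]
        simp only [Matrix.mul_assoc, h]
      have e3 : U * S * L = (U * Uᵀ) * (G * (1 - V * Vᵀ)) := by
        rw [hL]
        have h : S * (S⁻¹ * (Uᵀ * (G * (1 - V * Vᵀ)))) = Uᵀ * (G * (1 - V * Vᵀ)) := by
          rw [← Matrix.mul_assoc, hS2, Matrix.one_mul]
        simp only [Matrix.mul_assoc, h]
      have e4 : (1 - U * Uᵀ) * G * (1 - V * Vᵀ) = (1 - U * Uᵀ) * (G * (1 - V * Vᵀ)) := by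
        simp only [Matrix.mul_assoc]
      rw [e1, e2, e3, e4]
      simp only [Matrix.sub_mul, Matrix.mul_sub, Matrix.one_mul, Matrix.mul_one]
      abel
    set E := K * N * Vᵀ + U * N * L + K * S * L with hE
    set F := K * N * L with hF
    set t : ℕ → ℝ := fun i => ((i : ℝ) + 1)⁻¹ with ht
    set d : ℕ → Matrix (Fin m) (Fin n) ℝ :=
      fun i => t i • G + (t i) ^ 2 • E + (t i) ^ 3 • F with hd
    have key : ∀ s : ℝ, X + (s • G + s ^ 2 • E + s ^ 3 • F) =
        (U + s • K) * (S + s • N) * (Vᵀ + s • L) +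
          s • ((1 - U * Uᵀ) * G * (1 - V * Vᵀ)) := by
      intro s
      rw [aux_expand_identity s U K S N Vᵀ L, hXS, hlin, hE, hF]
      module
    have hrank : ∀ i : ℕ, (X + d i).rank ≤ k := by
      intro i
      rw [hd]
      simp only
      rw [key (t i)]
      refine le_trans (aux_rank_add_le _ _) ?_
      have h1 : ((U + t i • K) * (S + t i • N) * (Vᵀ + t i • L)).rank ≤ r :=
        le_trans (Matrix.rank_mul_le_left _ _)
          ((Matrix.rank_le_card_width _).trans (Fintype.card_fin r).le)
      have h2 : (t i • ((1 - U * Uᵀ) * G * (1 - V * Vᵀ))).rank ≤ k - r := by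
        have hsm : t i • ((1 - U * Uᵀ) * G * (1 - V * Vᵀ)) =
            (t i • (1 : Matrix (Fin m) (Fin m) ℝ)) * ((1 - U * Uᵀ) * G * (1 - V * Vᵀ)) := by
          rw [Matrix.smul_mul, Matrix.one_mul]
        rw [hsm]
        exact le_trans (Matrix.rank_mul_le_right _ _) hG
      omega
    refine mem_tangentConeAt_iff_exists_seq_norm_tendsto_atTop.mpr ⟨fun i => (i : ℝ) + 1, d, ?_, ?_, ?_⟩
    pick_goal 2
    · exact Eventually.of_forall fun i => hrank i
    · have hnorm : (fun i : ℕ => ‖(i : ℝ) + 1‖) = fun i : ℕ => (i : ℝ) + 1 := by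
        funext i; rw [Real.norm_eq_abs, abs_of_pos]; positivity
      rw [hnorm]
      exact tendsto_atTop_add_const_right _ _ tendsto_natCast_atTop_atTop
    · have hct : ∀ i : ℕ, ((i : ℝ) + 1) * t i = 1 := fun i => by
        rw [ht]
        exact mul_inv_cancel₀ (by positivity)
      have hsmul : (fun i : ℕ => ((i : ℝ) + 1) • d i) =
          fun i => G + t i • E + (t i) ^ 2 • F := by
        funext i
        rw [hd]
        exact aux_smul_cancel_cube (hct i) G E F
      rw [hsmul]
      have ht0 : Tendsto t atTop (nhds (0 : ℝ)) := by
        rw [ht]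
        exact tendsto_one_div_add_atTop_nhds_zero_nat.congr (fun i => one_div _)
      have hlim : Tendsto (fun i => G + t i • E + (t i) ^ 2 • F) atTop
          (nhds (G + (0 : ℝ) • E + ((0 : ℝ) ^ 2) • F)) :=
        (tendsto_const_nhds.add (ht0.smul_const E)).add ((ht0.pow 2).smul_const F)
      simp only [zero_smul, add_zero, ne_eq, OfNat.ofNat_ne_zero, not_false_eq_true, zero_pow] at hlim
      exact hlim
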